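/- Let ℓ ∈ ℕ, ℓ ≥ 1, and let s ∈ (0, ℓ]. Set m := ⌈s⌉. Then there exists a subset A ⊆ ℝ^ℓ that is countably m-rectifiable, has Hausdorff dimension exactly s, and has vanishing s-dimensional Hausdorff measure. -/

import Mathlib

open Set MeasureTheory
open Filter Topology ENNReal NNReal

/-- A subset `A` of a metric space is countably `m`-rectifiable iff it is the union of the
images of countably many Lipschitz maps, each defined on some subset of `ℝ^m`. -/
def CountablyRectifiable (m : ℕ) {X : Type*} [MetricSpace X] (A : Set X) : Prop :=
  ∃ (S : ℕ → Set (EuclideanSpace ℝ (Fin m))) (f : ∀ i, S i → X) (C : ℕ → NNReal),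
    (∀ i, LipschitzWith (C i) (f i)) ∧ A = ⋃ i, Set.range (f i)



noncomputable def digitSum (c : ℝ) (b : ℕ → Bool) : ℝ := ∑' n, if b n then c ^ n else 0

section digits
variable {c : ℝ} (hc0 : 0 ≤ c) (hc1 : c < 1)
include hc0 hc1

lemma summable_digit (b : ℕ → Bool) : Summable (fun n => if b n then c ^ n else 0) := by
  refine Summable.of_nonneg_of_le (fun n => ?_) (fun n => ?_)
    (summable_geometric_of_lt_one hc0 hc1)
  · split <;> positivity
  · split
    · exact le_rfl
    · positivity


lemma abs_ite_sub_ite_le (x y : Bool) (k : ℕ) :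
    |(if x then c ^ k else 0) - (if y then c ^ k else 0)| ≤ c ^ k := by
  have hk : (0:ℝ) ≤ c ^ k := pow_nonneg hc0 k
  rcases x <;> rcases y <;>
    simp [abs_of_nonneg hk, hk]

lemma abs_tsum_le_tail {f : ℕ → ℝ} {n : ℕ}
    (hf : ∀ k, |f k| ≤ if k < n then 0 else c ^ k) :
    |∑' k, f k| ≤ c ^ n * (1 - c)⁻¹ := by
  set g : ℕ → ℝ := fun k => if k < n then 0 else c ^ k with hg
  have hgs : Summable g := by
    refine Summable.of_nonneg_of_le (fun k => ?_) (fun k => ?_)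
      (summable_geometric_of_lt_one hc0 hc1)
    · simp only [hg]; split <;> positivity
    · simp only [hg]; split
      · positivity
      · exact le_rfl
  have hfs : Summable f := by
    refine Summable.of_norm_bounded hgs (fun k => ?_)
    simpa using hf k
  have habs : Summable fun k => ‖f k‖ := by simpa [Real.norm_eq_abs] using hfs.abs
  have h1 : |∑' k, f k| ≤ ∑' k, |f k| := by
    simpa [Real.norm_eq_abs] using norm_tsum_le_tsum_norm habs
  have h2 : ∑' k, |f k| ≤ ∑' k, g k := Summable.tsum_le_tsum hf hfs.abs hgs
  have h3 : ∑' k, g k = c ^ n * (1 - c)⁻¹ := by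
    have key := Summable.sum_add_tsum_nat_add n hgs
    have e1 : ∑ i ∈ Finset.range n, g i = 0 := by
      refine Finset.sum_eq_zero fun i hi => ?_
      simp only [hg]
      rw [if_pos (Finset.mem_range.1 hi)]
    have e2 : ∀ i : ℕ, g (i + n) = c ^ i * c ^ n := fun i => by
      simp only [hg]
      rw [if_neg (by omega), pow_add]
    have e3 : ∑' i, g (i + n) = c ^ n * (1 - c)⁻¹ := by
      simp_rw [e2]
      rw [_root_.tsum_mul_right, tsum_geometric_of_lt_one hc0 hc1, mul_comm]
    rw [← key, e1, zero_add, e3]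
  linarith

lemma digitSum_sub_le {b b' : ℕ → Bool} {n : ℕ} (h : ∀ k < n, b k = b' k) :
    |digitSum c b - digitSum c b'| ≤ c ^ n * (1 - c)⁻¹ := by
  have hb := summable_digit hc0 hc1 b
  have hb' := summable_digit hc0 hc1 b'
  rw [digitSum, digitSum, ← Summable.tsum_sub hb hb']
  refine abs_tsum_le_tail hc0 hc1 (fun k => ?_)
  by_cases hk : k < n
  · rw [if_pos hk, h k hk, sub_self, abs_zero]
  · rw [if_neg hk]
    exact abs_ite_sub_ite_le hc0 hc1 _ _ k

lemma digitSum_sub_ge {b b' : ℕ → Bool} {n : ℕ} (h : ∀ k < n, b k = b' k)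
    (hne : b n ≠ b' n) :
    c ^ n - c ^ (n + 1) * (1 - c)⁻¹ ≤ |digitSum c b - digitSum c b'| := by
  have hb := summable_digit hc0 hc1 b
  have hb' := summable_digit hc0 hc1 b'
  have hfs : Summable (fun k => (if b k then c ^ k else 0) - (if b' k then c ^ k else 0)) :=
    hb.sub hb'
  rw [digitSum, digitSum, ← Summable.tsum_sub hb hb']
  set f : ℕ → ℝ := fun k => (if b k then c ^ k else 0) - (if b' k then c ^ k else 0) with hf
  have hdec := Summable.tsum_eq_add_tsum_ite hfs n
  have hfn : |f n| = c ^ n := by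
    simp only [hf]
    rcases Bool.eq_false_or_eq_true (b n) with h1 | h1 <;>
      rcases Bool.eq_false_or_eq_true (b' n) with h2 | h2 <;>
      simp [h1, h2, abs_of_nonneg (pow_nonneg hc0 n)] at hne ⊢
  have htail : |∑' k, if k = n then 0 else f k| ≤ c ^ (n + 1) * (1 - c)⁻¹ := by
    refine abs_tsum_le_tail hc0 hc1 (fun k => ?_)
    rcases lt_trichotomy k n with hk | rfl | hk
    · rw [if_neg hk.ne, if_pos (by omega)]
      simp only [hf]
      rw [h k hk]; simp
    · simp
    · rw [if_neg hk.ne', if_neg (by omega)]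
      simp only [hf]
      exact abs_ite_sub_ite_le hc0 hc1 _ _ k
  calc c ^ n - c ^ (n + 1) * (1 - c)⁻¹
      ≤ |f n| - |∑' k, if k = n then 0 else f k| := by rw [hfn]; linarith
    _ ≤ |f n + ∑' k, if k = n then 0 else f k| := by
        have := abs_add_le (f n + ∑' k, if k = n then 0 else f k) (-(∑' k, if k = n then 0 else f k))
        simp at this
        linarith [abs_sub_abs_le_abs_sub (f n) (-(∑' k, if k = n then 0 else f k)),
          abs_neg (∑' k, if k = n then 0 else f k)]
    _ = |∑' k, f k| := by rw [← hdec]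

lemma digitSum_nonneg (b : ℕ → Bool) : 0 ≤ digitSum c b :=
  tsum_nonneg (fun n => by split <;> positivity)

lemma digitSum_le (b : ℕ → Bool) : digitSum c b ≤ (1 - c)⁻¹ := by
  have := Summable.tsum_le_tsum (f := fun n => if b n then c ^ n else 0) (g := fun n => c ^ n)
    (fun n => by split; exacts [le_rfl, pow_nonneg hc0 n])
    (summable_digit hc0 hc1 b) (summable_geometric_of_lt_one hc0 hc1)
  rwa [tsum_geometric_of_lt_one hc0 hc1] at this

end digits



lemma exists_digits_half {y : ℝ} (hy : y ∈ Icc (0:ℝ) 2) :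
    ∃ b : ℕ → Bool, digitSum (1/2) b = y := by
  rcases eq_or_lt_of_le hy.2 with h2 | h2
  · refine ⟨fun _ => true, ?_⟩
    rw [digitSum]
    simp only [if_true]
    rw [tsum_geometric_of_lt_one (by norm_num) (by norm_num)]
    norm_num [h2]
  · -- y ∈ [0, 2)
    set z : ℝ := y / 2 with hz
    have hz0 : 0 ≤ z := div_nonneg hy.1 (by norm_num)
    have hz1 : z < 1 := by rw [hz]; linarith
    set b : ℕ → Bool := fun n => decide (⌊z * 2 ^ (n + 1)⌋ % 2 = 1) with hb
    set f : ℕ → ℝ := fun n => if b n then (1/2 : ℝ) ^ (n + 1) else 0 with hf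
    have key : ∀ N : ℕ, ∑ n ∈ Finset.range N, f n = (⌊z * 2 ^ N⌋ : ℝ) / 2 ^ N := by
      intro N
      induction N with
      | zero =>
        simp only [Finset.range_zero, Finset.sum_empty, pow_zero, mul_one]
        rw [Int.floor_eq_zero_iff.2 (Set.mem_Ico.2 ⟨hz0, hz1⟩)]
        simp
      | succ N ih =>
        set w : ℝ := z * 2 ^ N with hw
        set p : ℤ := ⌊w⌋ with hp
        set q : ℤ := ⌊2 * w⌋ - 2 * p with hq
        have hfl : ⌊2 * w⌋ = 2 * p + q := by omega
        have hq0 : 0 ≤ q := by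
          have : 2 * p ≤ ⌊2 * w⌋ := by
            refine Int.le_floor.2 ?_
            push_cast
            linarith [Int.floor_le w]
          omega
        have hq1 : q ≤ 1 := by
          have : ⌊2 * w⌋ < 2 * p + 2 := by
            refine Int.floor_lt.2 ?_
            push_cast
            linarith [Int.lt_floor_add_one w]
          omega
        have hzw : z * 2 ^ (N + 1) = 2 * w := by rw [hw]; ring
        have hterm : f N = (q : ℝ) / 2 ^ (N + 1) := by
          simp only [hf, hb, hzw, hfl]
          interval_cases q <;> simp <;> omega
        rw [Finset.sum_range_succ, ih, hterm, hzw, hfl]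
        push_cast
        field_simp
        ring
      -- end induction
    have hsum : Summable f := by
      have := summable_digit (c := (1/2:ℝ)) (by norm_num) (by norm_num) b
      have h2 : f = fun n => (1/2 : ℝ) * if b n then (1/2:ℝ) ^ n else 0 := by
        funext n
        simp only [hf]
        split <;> ring
      rw [h2]
      exact this.mul_left _
    have hlim : Tendsto (fun N => ∑ n ∈ Finset.range N, f n) atTop (𝓝 z) := by
      have hdist : ∀ N : ℕ, |(∑ n ∈ Finset.range N, f n) - z| ≤ (1/2 : ℝ) ^ N := by
        intro N
        rw [key N]
        have h1 : (⌊z * 2 ^ N⌋ : ℝ) ≤ z * 2 ^ N := Int.floor_le _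
        have h2' : z * 2 ^ N < ⌊z * 2 ^ N⌋ + 1 := Int.lt_floor_add_one _
        have hpos : (0:ℝ) < 2 ^ N := by positivity
        rw [abs_le]
        constructor
        · rw [div_sub' hpos.ne', le_div_iff₀ hpos]
          have : ((1:ℝ)/2) ^ N * 2 ^ N = 1 := by
            rw [← mul_pow]; norm_num
          nlinarith
        · rw [div_sub' hpos.ne', div_le_iff₀ hpos]
          have : ((1:ℝ)/2) ^ N * 2 ^ N = 1 := by
            rw [← mul_pow]; norm_num
          nlinarith
      have h0 : Tendsto (fun N : ℕ => ((1:ℝ)/2) ^ N) atTop (𝓝 (0:ℝ)) :=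
        tendsto_pow_atTop_nhds_zero_of_lt_one (by norm_num) (by norm_num)
      have := squeeze_zero_norm (f := fun N => (∑ n ∈ Finset.range N, f n) - z)
        (fun N => by simpa using hdist N) h0
      simpa using this.add_const z
    have htsum : ∑' n, f n = z :=
      tendsto_nhds_unique hsum.hasSum.tendsto_sum_nat hlim
    refine ⟨b, ?_⟩
    have : digitSum (1/2) b = 2 * ∑' n, f n := by
      rw [digitSum, ← _root_.tsum_mul_left]
      congr 1
      funext n
      simp only [hf]
      split <;> ring
    rw [this, htsum, hz]
    ring


noncomputable def cantorMap (m : ℕ) (c : ℝ) (x : Fin m → ℕ → Bool) :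
    EuclideanSpace ℝ (Fin m) := WithLp.toLp 2 (fun i => digitSum c (x i))

lemma coord_dist_le {m : ℕ} (u v : EuclideanSpace ℝ (Fin m)) (i : Fin m) :
    dist (u i) (v i) ≤ dist u v := by
  rw [EuclideanSpace.dist_eq]
  rw [show dist (u i) (v i) = Real.sqrt (dist (u i) (v i) ^ 2) from
    (Real.sqrt_sq dist_nonneg).symm]
  exact Real.sqrt_le_sqrt (Finset.single_le_sum (f := fun j => dist (u j) (v j) ^ 2)
    (fun j _ => sq_nonneg _) (Finset.mem_univ i))

lemma euclid_dist_le {m : ℕ} (u v : EuclideanSpace ℝ (Fin m)) {B : ℝ} (hB : 0 ≤ B)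
    (h : ∀ i, dist (u i) (v i) ≤ B) : dist u v ≤ Real.sqrt m * B := by
  rw [EuclideanSpace.dist_eq]
  have h1 : ∑ i, dist (u i) (v i) ^ 2 ≤ (m : ℝ) * B ^ 2 := by
    calc ∑ i, dist (u i) (v i) ^ 2 ≤ ∑ _i : Fin m, B ^ 2 :=
          Finset.sum_le_sum fun i _ => pow_le_pow_left₀ dist_nonneg (h i) 2
      _ = (m : ℝ) * B ^ 2 := by simp [Finset.sum_const, mul_comm]
  calc Real.sqrt (∑ i, dist (u i) (v i) ^ 2) ≤ Real.sqrt ((m : ℝ) * B ^ 2) :=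
        Real.sqrt_le_sqrt h1
    _ = Real.sqrt m * B := by
        rw [Real.sqrt_mul (Nat.cast_nonneg m), Real.sqrt_sq hB]

section cantor

variable {m : ℕ} {t : ℝ} (ht0 : 0 < t) (ht1 : t < 1)

lemma ratio_pos : (0:ℝ) < (1/2 : ℝ) ^ (1/t : ℝ) := Real.rpow_pos_of_pos one_half_pos _

include ht0 ht1 in
lemma ratio_lt_half : (1/2 : ℝ) ^ (1/t : ℝ) < 1/2 := by
  have h1 : (1:ℝ) < 1/t := by rw [lt_div_iff₀ ht0]; linarith
  have := Real.rpow_lt_rpow_of_exponent_gt (x := (1/2:ℝ)) (by norm_num) (by norm_num) h1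
  simpa [Real.rpow_one] using this

include ht0 in
lemma ratio_pow (n : ℕ) : (((1/2 : ℝ) ^ (1/t : ℝ)) ^ n) ^ t = (1/2 : ℝ) ^ n := by
  have h0 : (0:ℝ) ≤ (1/2 : ℝ) ^ (1/t : ℝ) := (ratio_pos (t := t)).le
  rw [← Real.rpow_natCast ((1/2 : ℝ) ^ (1/t : ℝ)) n, ← Real.rpow_mul h0,
    ← Real.rpow_mul (by norm_num : (0:ℝ) ≤ 1/2)]
  rw [show (1/t) * ((n : ℝ) * t) = (n : ℝ) by field_simp]
  rw [Real.rpow_natCast]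
end cantor

section main
variable {m : ℕ} {t : ℝ}

/-- The key construction. -/
theorem exists_cantor_set (m : ℕ) (t : ℝ) (ht0 : 0 < t) (ht1 : t < 1) :
    ∃ C : Set (EuclideanSpace ℝ (Fin m)), dimH C = ENNReal.ofReal (m * t) := by
  classical
  set a : ℝ := (1/2 : ℝ) ^ (1/t : ℝ) with ha
  have ha0 : 0 < a := ratio_pos
  have ha2 : a < 1/2 := ratio_lt_half ht0 ht1
  have ha1 : a < 1 := ha2.trans (by norm_num)
  have hapow : ∀ n : ℕ, (a ^ n) ^ t = (1/2 : ℝ) ^ n := ratio_pow ht0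
  set κ : ℝ := 1 - a * (1 - a)⁻¹ with hκdef
  have h1a : (0:ℝ) < 1 - a := by linarith
  have hκ : 0 < κ := by
    rw [hκdef, sub_pos, mul_inv_lt_iff₀ h1a]
    linarith
  -- separation: lower bound rewritten
  have hsep : ∀ (b b' : ℕ → Bool) (n : ℕ), (∀ k < n, b k = b' k) → b n ≠ b' n →
      a ^ n * κ ≤ |digitSum a b - digitSum a b'| := by
    intro b b' n h hne
    have := digitSum_sub_ge ha0.le ha1 h hne
    calc a ^ n * κ = a ^ n - a ^ (n+1) * (1-a)⁻¹ := by rw [hκdef]; ring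
      _ ≤ _ := this
  -- injectivity of digitSum a
  have hinj : Function.Injective (digitSum a) := by
    intro b b' hbb'
    by_contra hne
    have hex : ∃ n, b n ≠ b' n := by
      by_contra hh
      push_neg at hh
      exact hne (funext hh)
    set n := Nat.find hex with hn
    have h1 : b n ≠ b' n := Nat.find_spec hex
    have h2 : ∀ k < n, b k = b' k := fun k hk => by
      have := Nat.find_min hex hk
      simpa using this
    have := hsep b b' n h2 h1
    rw [hbb', sub_self, abs_zero] at this
    nlinarith [pow_pos ha0 n, hκ]
  have hinjF : Function.Injective (cantorMap m a) := by
    intro x y hxy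
    funext i n
    have : digitSum a (x i) = digitSum a (y i) := congrFun (congrArg WithLp.ofLp hxy) i
    exact congrFun (hinj this) n
  set C : Set (EuclideanSpace ℝ (Fin m)) := Set.range (cantorMap m a) with hC
  refine ⟨C, ?_⟩
  have hdiam : ∀ (n : ℕ) (w : Fin m → Fin n → Bool),
      EMetric.diam (cantorMap m a '' {x | ∀ i (k : Fin n), x i k = w i k})
        ≤ ENNReal.ofReal (Real.sqrt m * (a ^ n * (1 - a)⁻¹)) := by
    intro n w
    apply EMetric.diam_le
    rintro p ⟨x, hx, rfl⟩ q ⟨y, hy, rfl⟩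
    rw [edist_dist]
    apply ENNReal.ofReal_le_ofReal
    refine euclid_dist_le _ _ (by positivity) (fun i => ?_)
    have hagree : ∀ k, k < n → x i k = y i k := by
      intro k hk
      rw [hx i ⟨k, hk⟩, hy i ⟨k, hk⟩]
    calc dist (cantorMap m a x i) (cantorMap m a y i)
        = |digitSum a (x i) - digitSum a (y i)| := Real.dist_eq _ _
      _ ≤ a ^ n * (1 - a)⁻¹ := digitSum_sub_le ha0.le ha1 hagree
  -- ===== upper bound =====
  have hub : dimH C ≤ ENNReal.ofReal (m * t) := by
    set Kc : ℝ := (Real.sqrt m * (1 - a)⁻¹) ^ (m * t : ℝ) with hKc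
    have hKc0 : 0 ≤ Kc := Real.rpow_nonneg (by positivity) _
    have hmeas : μH[(m * t : ℝ)] C ≤ ENNReal.ofReal Kc := by
      have hcov := Measure.hausdorffMeasure_le_liminf_sum (X := EuclideanSpace ℝ (Fin m))
        (ι := fun n : ℕ => Fin m → Fin n → Bool) (m * t : ℝ) C (l := atTop)
        (fun n => ENNReal.ofReal (Real.sqrt m * (a ^ n * (1 - a)⁻¹)))
        ?_ (fun n w => cantorMap m a '' {x | ∀ i (k : Fin n), x i k = w i k}) ?_ ?_
      · refine hcov.trans ?_
        have hterm : ∀ n : ℕ,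
            (∑ w : Fin m → Fin n → Bool,
              EMetric.diam (cantorMap m a '' {x | ∀ i (k : Fin n), x i k = w i k})
                ^ (m * t : ℝ)) ≤ ENNReal.ofReal Kc := by
          intro n
          have hcard : (Fintype.card (Fin m → Fin n → Bool)) = 2 ^ (n * m) := by
            simp [Fintype.card_fun, pow_mul]
          have hstep1 : (∑ w : Fin m → Fin n → Bool,
              EMetric.diam (cantorMap m a '' {x | ∀ i (k : Fin n), x i k = w i k})
                ^ (↑m * t : ℝ))
              ≤ ∑ _w : Fin m → Fin n → Bool,
                  (ENNReal.ofReal (Real.sqrt m * (a ^ n * (1 - a)⁻¹))) ^ (↑m * t : ℝ) := by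
            refine Finset.sum_le_sum fun w _ => ?_
            exact ENNReal.rpow_le_rpow (hdiam n w) (by positivity)
          refine hstep1.trans ?_
          rw [Finset.sum_const, Finset.card_univ, hcard, nsmul_eq_mul,
            ENNReal.ofReal_rpow_of_nonneg (by positivity) (by positivity)]
          have hrpow : (Real.sqrt m * (a ^ n * (1 - a)⁻¹)) ^ (↑m * t : ℝ)
              = Kc * ((1:ℝ)/2) ^ (n * m) := by
            have e1 : Real.sqrt m * (a ^ n * (1 - a)⁻¹)
                = (Real.sqrt m * (1 - a)⁻¹) * a ^ n := by ring
            rw [e1, Real.mul_rpow (by positivity) (by positivity)]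
            congr 1
            rw [mul_comm (m : ℝ) t, Real.rpow_mul (pow_nonneg ha0.le n), hapow n,
              Real.rpow_natCast, ← pow_mul]
          rw [hrpow]
          have hnat : ((2 ^ (n * m) : ℕ) : ℝ≥0∞) = ENNReal.ofReal ((2:ℝ) ^ (n * m)) := by
            rw [← ENNReal.ofReal_natCast]
            congr 1
            push_cast
            ring
          rw [hnat, ← ENNReal.ofReal_mul (by positivity)]
          apply ENNReal.ofReal_le_ofReal
          have h21 : (2:ℝ) ^ (n * m) * ((1:ℝ)/2) ^ (n * m) = 1 := by
            rw [← mul_pow]; norm_num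
          calc (2:ℝ) ^ (n * m) * (Kc * ((1:ℝ)/2) ^ (n * m))
              = Kc * ((2:ℝ) ^ (n * m) * ((1:ℝ)/2) ^ (n * m)) := by ring
            _ = Kc := by rw [h21, mul_one]
            _ ≤ Kc := le_rfl
        refine le_trans (Filter.liminf_le_liminf (Filter.Eventually.of_forall hterm)) ?_
        simp [Filter.liminf_const]
      · -- tendsto
        have hreal : Tendsto (fun n : ℕ => Real.sqrt m * (a ^ n * (1 - a)⁻¹)) atTop
            (𝓝 (0:ℝ)) := by
          have h0 := tendsto_pow_atTop_nhds_zero_of_lt_one ha0.le ha1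
          simpa using (h0.mul_const (1 - a)⁻¹).const_mul (Real.sqrt m)
        have := (ENNReal.continuous_ofReal.tendsto (0:ℝ)).comp hreal
        simpa only [Function.comp_def, ENNReal.ofReal_zero] using this
      · -- diam bounds
        exact Filter.Eventually.of_forall (fun n => hdiam n)
      · -- covering
        refine Filter.Eventually.of_forall (fun n => ?_)
        rintro p ⟨x, rfl⟩
        exact Set.mem_iUnion.2 ⟨fun i k => x i k, ⟨x, fun i k => rfl, rfl⟩⟩
    refine le_trans (dimH_le_of_hausdorffMeasure_ne_top (d := Real.toNNReal (↑m * t)) ?_) ?_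
    · rw [Real.coe_toNNReal _ (by positivity)]
      exact (hmeas.trans_lt ENNReal.ofReal_lt_top).ne
    · exact le_of_eq rfl
  -- ===== lower bound =====
  have hlb : ENNReal.ofReal (m * t) ≤ dimH C := by
    classical
    set g : EuclideanSpace ℝ (Fin m) → EuclideanSpace ℝ (Fin m) :=
      fun u => if h : u ∈ C then cantorMap m (1/2) h.choose else 0 with hg
    have hgspec : ∀ x, g (cantorMap m a x) = cantorMap m (1/2) x := by
      intro x
      have hmem : cantorMap m a x ∈ C := ⟨x, rfl⟩
      rw [hg]
      simp only [dif_pos hmem]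
      exact congrArg _ (hinjF hmem.choose_spec)
    -- coordinatewise Hölder bound
    have hcoord : ∀ b b' : ℕ → Bool,
        |digitSum (1/2) b - digitSum (1/2) b'| ≤
          (2 * κ⁻¹ ^ t) * |digitSum a b - digitSum a b'| ^ t := by
      intro b b'
      by_cases hbb : b = b'
      · subst hbb
        simp only [sub_self, abs_zero]
        positivity
      · have hex : ∃ n, b n ≠ b' n := by
          by_contra hh
          push_neg at hh
          exact hbb (funext hh)
        set n := Nat.find hex with hn
        have h1 : b n ≠ b' n := Nat.find_spec hex
        have h2 : ∀ k < n, b k = b' k := fun k hk => by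
          have := Nat.find_min hex hk
          simpa using this
        set D : ℝ := |digitSum a b - digitSum a b'| with hD
        have hDlb : a ^ n * κ ≤ D := hsep b b' n h2 h1
        have hup : |digitSum (1/2) b - digitSum (1/2) b'|
            ≤ (1/2 : ℝ) ^ n * (1 - 1/2 : ℝ)⁻¹ :=
          digitSum_sub_le (by norm_num) (by norm_num) h2
        have han : a ^ n ≤ κ⁻¹ * D := by
          rw [inv_mul_eq_div, le_div_iff₀ hκ]
          exact hDlb
        have ht' : (a ^ n) ^ t ≤ (κ⁻¹ * D) ^ t :=
          Real.rpow_le_rpow (pow_nonneg ha0.le n) han ht0.le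
        rw [hapow n, Real.mul_rpow (inv_nonneg.2 hκ.le) (abs_nonneg _)] at ht'
        have h12 : ((1:ℝ) - 1/2)⁻¹ = 2 := by norm_num
        rw [h12] at hup
        calc |digitSum (1/2) b - digitSum (1/2) b'| ≤ (1/2 : ℝ) ^ n * 2 := hup
          _ ≤ (κ⁻¹ ^ t * D ^ t) * 2 := by nlinarith
          _ = (2 * κ⁻¹ ^ t) * D ^ t := by ring
    -- Hölder property of g on C
    set tn : ℝ≥0 := ⟨t, ht0.le⟩ with htn
    set K : ℝ≥0 := Real.toNNReal (Real.sqrt m * (2 * κ⁻¹ ^ t)) with hK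
    have htnpos : 0 < tn := by
      rw [← NNReal.coe_pos]
      exact ht0
    have hHolder : HolderOnWith K tn g C := by
      rintro u ⟨x, rfl⟩ v ⟨y, rfl⟩
      rw [hgspec x, hgspec y, edist_dist, edist_dist]
      set d : ℝ := dist (cantorMap m a x) (cantorMap m a y) with hd
      have hd0 : 0 ≤ d := dist_nonneg
      have hreal : dist (cantorMap m (1/2) x) (cantorMap m (1/2) y)
          ≤ (Real.sqrt m * (2 * κ⁻¹ ^ t)) * d ^ t := by
        have hB : (0:ℝ) ≤ (2 * κ⁻¹ ^ t) * d ^ t := by positivity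
        refine le_trans (euclid_dist_le _ _ hB (fun i => ?_)) (le_of_eq (by ring))
        have hcd : |digitSum a (x i) - digitSum a (y i)| ≤ d := by
          have := coord_dist_le (cantorMap m a x) (cantorMap m a y) i
          rwa [Real.dist_eq] at this
        have hcdt : |digitSum a (x i) - digitSum a (y i)| ^ t ≤ d ^ t :=
          Real.rpow_le_rpow (abs_nonneg _) hcd ht0.le
        calc dist (cantorMap m (1/2) x i) (cantorMap m (1/2) y i)
            = |digitSum (1/2) (x i) - digitSum (1/2) (y i)| := Real.dist_eq _ _
          _ ≤ (2 * κ⁻¹ ^ t) * |digitSum a (x i) - digitSum a (y i)| ^ t := hcoord _ _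
          _ ≤ (2 * κ⁻¹ ^ t) * d ^ t := by
              have h2κ : (0:ℝ) ≤ 2 * κ⁻¹ ^ t := by positivity
              nlinarith
      calc ENNReal.ofReal (dist (cantorMap m (1/2) x) (cantorMap m (1/2) y))
          ≤ ENNReal.ofReal ((Real.sqrt m * (2 * κ⁻¹ ^ t)) * d ^ t) :=
            ENNReal.ofReal_le_ofReal hreal
        _ = (K : ℝ≥0∞) * ENNReal.ofReal d ^ (tn : ℝ) := by
            rw [ENNReal.ofReal_mul (by positivity)]
            congr 1
            rw [← ENNReal.ofReal_rpow_of_nonneg hd0 ht0.le]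
            rfl
    -- image of C under g
    have himg : g '' C = {u : EuclideanSpace ℝ (Fin m) | ∀ i, u i ∈ Icc (0:ℝ) 2} := by
      have h1 : g '' C = Set.range (cantorMap m (1/2)) := by
        rw [hC, ← Set.range_comp]
        exact congrArg Set.range (funext hgspec)
      rw [h1]
      ext u
      constructor
      · rintro ⟨x, rfl⟩ i
        refine ⟨digitSum_nonneg (by norm_num) (by norm_num) _, ?_⟩
        have := digitSum_le (c := (1/2 : ℝ)) (by norm_num) (by norm_num) (x i)
        norm_num at this
        exact this
      · intro hu
        choose b hb using fun i => exists_digits_half (hu i)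
        exact ⟨b, WithLp.ofLp_injective 2 (funext hb)⟩
    -- dimension of the image
    have hdim_img : dimH (g '' C) = (m : ℝ≥0∞) := by
      rw [himg]
      set c₀ : EuclideanSpace ℝ (Fin m) := WithLp.toLp 2 (fun _ => 1) with hc₀
      have hball : Metric.ball c₀ 1
          ⊆ {u : EuclideanSpace ℝ (Fin m) | ∀ i, u i ∈ Icc (0:ℝ) 2} := by
        intro u hu i
        have h1 : dist (u i) 1 ≤ dist u c₀ := coord_dist_le u c₀ i
        have h2 : dist u c₀ < 1 := Metric.mem_ball.1 hu
        have h3 : |u i - 1| < 1 := by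
          rw [← Real.dist_eq]
          linarith
        rcases abs_lt.1 h3 with ⟨h4, h5⟩
        exact ⟨by linarith, by linarith⟩
      have hne : (interior {u : EuclideanSpace ℝ (Fin m) | ∀ i, u i ∈ Icc (0:ℝ) 2}).Nonempty :=
        ⟨_, interior_maximal hball Metric.isOpen_ball (Metric.mem_ball_self one_pos)⟩
      rw [Real.dimH_of_nonempty_interior hne]
      simp
    -- conclude
    have hdiv := hHolder.dimH_image_le htnpos
    rw [hdim_img] at hdiv
    have h2 := (ENNReal.le_div_iff_mul_le
      (Or.inl (by exact_mod_cast htnpos.ne' : (tn : ℝ≥0∞) ≠ 0))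
      (Or.inl ENNReal.coe_ne_top)).1 hdiv
    refine le_trans (le_of_eq ?_) h2
    rw [ENNReal.ofReal_mul (Nat.cast_nonneg m)]
    congr 1
    · exact ENNReal.ofReal_natCast m
    · rw [ENNReal.ofReal]
      congr 1
      exact Real.toNNReal_of_nonneg ht0.le
  exact le_antisymm hub hlb
end main



noncomputable def euclidEmbed (m ℓ : ℕ) (x : EuclideanSpace ℝ (Fin m)) :
    EuclideanSpace ℝ (Fin ℓ) := WithLp.toLp 2 (fun i => if h' : (i : ℕ) < m then x ⟨i, h'⟩ else 0)

lemma euclidEmbed_isometry (m ℓ : ℕ) (h : m ≤ ℓ) : Isometry (euclidEmbed m ℓ) := by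
  apply Isometry.of_dist_eq
  intro x y
  rw [EuclideanSpace.dist_eq, EuclideanSpace.dist_eq]
  congr 1
  set F : ℕ → ℝ := fun j => if h' : j < m then dist (x ⟨j, h'⟩) (y ⟨j, h'⟩) ^ 2 else 0 with hF
  have h1 : ∀ i : Fin ℓ, dist (euclidEmbed m ℓ x i) (euclidEmbed m ℓ y i) ^ 2 = F i := by
    intro i
    by_cases h' : (i : ℕ) < m
    · simp [euclidEmbed, hF, h']
    · simp [euclidEmbed, hF, h']
  have h2 : ∀ i : Fin m, dist (x i) (y i) ^ 2 = F i := by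
    intro i
    simp only [hF, dif_pos i.isLt]
  calc ∑ i : Fin ℓ, dist (euclidEmbed m ℓ x i) (euclidEmbed m ℓ y i) ^ 2
      = ∑ i : Fin ℓ, F i := Finset.sum_congr rfl (fun i _ => h1 i)
    _ = ∑ j ∈ Finset.range ℓ, F j := Fin.sum_univ_eq_sum_range F ℓ
    _ = ∑ j ∈ Finset.range m, F j := by
        refine (Finset.sum_subset (Finset.range_subset_range.2 h) fun j _ hj => ?_).symm
        rw [Finset.mem_range, not_lt] at hj
        simp [hF, Nat.not_lt.2 hj]
    _ = ∑ i : Fin m, F i := (Fin.sum_univ_eq_sum_range F m).symm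
    _ = ∑ i : Fin m, dist (x i) (y i) ^ 2 := Finset.sum_congr rfl (fun i _ => (h2 i).symm)


/-- **Existence of a countably `⌈s⌉`-rectifiable subset of `ℝ^ℓ` of Hausdorff dimension
exactly `s` with vanishing `s`-dimensional Hausdorff measure**, for every `s ∈ (0, ℓ]`. -/
theorem exists_rectifiable_of_dimension (ℓ : ℕ) (hl : 1 ≤ ℓ) (s : ℝ)
    (hs : 0 < s) (hsl : s ≤ ℓ) :
    ∃ A : Set (EuclideanSpace ℝ (Fin ℓ)),
      CountablyRectifiable ⌈s⌉₊ A ∧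
      dimH A = ENNReal.ofReal s ∧
      μH[s] A = 0 := by
  classical
  set m : ℕ := ⌈s⌉₊ with hm
  have hm1 : 1 ≤ m := Nat.one_le_ceil_iff.2 hs
  have hml : m ≤ ℓ := Nat.ceil_le.2 hsl
  have hsm : s ≤ (m : ℝ) := Nat.le_ceil s
  have hm0 : (0:ℝ) < m := by exact_mod_cast hm1
  set c : ℕ → ℝ := fun j => 1 - 1/(j+2) with hc
  have hc0 : ∀ j, 0 < c j := by
    intro j
    have h1 : (1 : ℝ)/(j+2) < 1 := by
      rw [div_lt_one (by positivity)]
      have : (0:ℝ) ≤ j := Nat.cast_nonneg j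
      linarith
    simp only [hc]
    linarith
  have hc1 : ∀ j, c j < 1 := by
    intro j
    have : (0:ℝ) < 1/(j+2) := by positivity
    simp only [hc]
    linarith
  set tj : ℕ → ℝ := fun j => (s / m) * c j with htj
  have ht0 : ∀ j, 0 < tj j := fun j => by
    have := hc0 j
    positivity
  have hsm1 : s / m ≤ 1 := by
    rw [div_le_one hm0]
    exact hsm
  have ht1 : ∀ j, tj j < 1 := by
    intro j
    calc tj j = (s/m) * c j := rfl
      _ ≤ 1 * c j := by
          have := (hc0 j).le
          gcongr
      _ = c j := one_mul _
      _ < 1 := hc1 j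
  have hmt : ∀ j, (m : ℝ) * tj j = s * c j := by
    intro j
    simp only [htj]
    field_simp
  choose Cset hCdim using fun j => exists_cantor_set m (tj j) (ht0 j) (ht1 j)
  have hCdim' : ∀ j, dimH (Cset j) = ENNReal.ofReal (s * c j) := by
    intro j
    rw [hCdim j, hmt j]
  have hiso : Isometry (euclidEmbed m ℓ) := euclidEmbed_isometry m ℓ hml
  refine ⟨⋃ j, euclidEmbed m ℓ '' Cset j, ?_, ?_, ?_⟩
  · -- rectifiable
    refine ⟨Cset, fun j p => euclidEmbed m ℓ p.1, fun _ => 1, fun j => ?_, ?_⟩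
    · have := hiso.lipschitz.comp (LipschitzWith.subtype_val (Cset j))
      rw [mul_one] at this; exact this
    · refine iUnion_congr fun j => ?_
      show euclidEmbed m ℓ '' Cset j = Set.range (euclidEmbed m ℓ ∘ (Subtype.val : Cset j → _))
      rw [Set.range_comp, Subtype.range_coe]
  · -- dimension
    rw [dimH_iUnion]
    have himg : ∀ j, dimH (euclidEmbed m ℓ '' Cset j) = ENNReal.ofReal (s * c j) := by
      intro j
      rw [hiso.dimH_image, hCdim' j]
    simp_rw [himg]
    apply le_antisymm
    · refine iSup_le fun j => ENNReal.ofReal_le_ofReal ?_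
      have h1 := (hc1 j).le
      nlinarith
    · have hc_tend : Tendsto c atTop (𝓝 (1:ℝ)) := by
        have h1 : Tendsto (fun j : ℕ => ((j:ℝ) + 2)) atTop atTop :=
          tendsto_atTop_add_const_right atTop 2 tendsto_natCast_atTop_atTop
        have h2 : Tendsto (fun j : ℕ => 1/((j:ℝ)+2)) atTop (𝓝 0) := by
          simpa [one_div, Pi.inv_def] using h1.inv_tendsto_atTop
        have h3 := Filter.Tendsto.sub
          (tendsto_const_nhds : Tendsto (fun _ : ℕ => (1:ℝ)) atTop (𝓝 1)) h2
        simpa [hc, one_div] using h3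
      have htend : Tendsto (fun j => ENNReal.ofReal (s * c j)) atTop
          (𝓝 (ENNReal.ofReal s)) := by
        have hreal : Tendsto (fun j => s * c j) atTop (𝓝 s) := by
          have := hc_tend.const_mul s
          simpa [hc, one_div] using this
        exact (ENNReal.continuous_ofReal.tendsto s).comp hreal
      exact le_of_tendsto htend
        (Filter.Eventually.of_forall fun j => le_iSup_of_le j le_rfl)
  · -- measure zero
    refine measure_iUnion_null fun j => ?_
    have h1 : μH[s] (euclidEmbed m ℓ '' Cset j) = μH[s] (Cset j) :=
      hiso.hausdorffMeasure_image (Or.inl hs.le) _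
    rw [h1]
    have h2 : dimH (Cset j) < (s.toNNReal : ℝ≥0∞) := by
      rw [hCdim' j]
      rw [show ((s.toNNReal : ℝ≥0∞)) = ENNReal.ofReal s from rfl]
      rw [ENNReal.ofReal_lt_ofReal_iff hs]
      nlinarith [hc1 j, hc0 j]
    have h3 := hausdorffMeasure_of_dimH_lt h2
    rwa [Real.coe_toNNReal _ hs.le] at h3
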